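/- Let (Q,∘) be a quasigroup. For every finite subset S ⊆ Q there exist a finite quasigroup (H,⊙) and an injective map j : S → H such that for all s₁,s₂ ∈ S with s₁∘s₂ ∈ S one has j(s₁∘s₂) = j(s₁)⊙j(s₂). In particular this holds when Q is a group. -/

import Mathlib

open Finset

section Aux

/-- Margin realization: a nonnegative integer matrix with prescribed row and
column sums exists as soon as the totals agree. -/
lemma marg_realize {α β : Type*} [Fintype α] [Fintype β] [DecidableEq α] [DecidableEq β]
    (r : α → ℕ) (s : β → ℕ) (h : ∑ a, r a = ∑ b, s b) :
    ∃ W : α → β → ℕ, (∀ a, ∑ b, W a b = r a) ∧ (∀ b, ∑ a, W a b = s b) := by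
  classical
  set N := ∑ a, r a with hN
  clear_value N
  induction N generalizing r s with
  | zero =>
    refine ⟨fun _ _ => 0, fun a => ?_, fun b => ?_⟩
    · simp only [Finset.sum_const_zero]
      have := Finset.sum_eq_zero_iff.mp hN.symm
      exact (this a (mem_univ a)).symm
    · simp only [Finset.sum_const_zero]
      have : ∑ b, s b = 0 := by omega
      exact ((Finset.sum_eq_zero_iff.mp this) b (mem_univ b)).symm
  | succ n ih =>
    obtain ⟨a₀, ha₀⟩ : ∃ a, 0 < r a := by
      by_contra hc
      push_neg at hc
      have : ∑ a, r a = 0 := Finset.sum_eq_zero fun a _ => Nat.le_zero.mp (hc a)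
      omega
    obtain ⟨b₀, hb₀⟩ : ∃ b, 0 < s b := by
      by_contra hc
      push_neg at hc
      have : ∑ b, s b = 0 := Finset.sum_eq_zero fun b _ => Nat.le_zero.mp (hc b)
      omega
    set r' := Function.update r a₀ (r a₀ - 1) with hr'
    set s' := Function.update s b₀ (s b₀ - 1) with hs'
    have hrsum : ∑ a, r' a = ∑ a, r a - 1 := by
      rw [hr']
      rw [Finset.sum_update_of_mem (mem_univ a₀)]
      have : ∑ a ∈ univ \ {a₀}, r a + r a₀ = ∑ a, r a := by
        have := Finset.sum_sdiff (Finset.singleton_subset_iff.mpr (mem_univ a₀)) (f := r)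
        simpa using this
      omega
    have hssum : ∑ b, s' b = ∑ b, s b - 1 := by
      rw [hs']
      rw [Finset.sum_update_of_mem (mem_univ b₀)]
      have : ∑ b ∈ univ \ {b₀}, s b + s b₀ = ∑ b, s b := by
        have := Finset.sum_sdiff (Finset.singleton_subset_iff.mpr (mem_univ b₀)) (f := s)
        simpa using this
      omega
    obtain ⟨W, hW1, hW2⟩ := ih r' s' (by omega) (by omega)
    refine ⟨fun a b => W a b + if a = a₀ ∧ b = b₀ then 1 else 0, fun a => ?_, fun b => ?_⟩
    · rw [Finset.sum_add_distrib, hW1]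
      by_cases ha : a = a₀
      · subst ha
        simp only [true_and, Finset.sum_ite_eq' univ b₀ (fun _ => 1), mem_univ, if_true]
        rw [hr', Function.update_self]
        omega
      · simp only [ha, false_and, if_false, Finset.sum_const_zero]
        rw [hr', Function.update_of_ne ha]
        omega
    · rw [Finset.sum_add_distrib, hW2]
      by_cases hb : b = b₀
      · subst hb
        have : ∀ a, (if a = a₀ ∧ b = b then 1 else 0) = if a = a₀ then 1 else 0 := by
          intro a; simp
        simp only [and_true, Finset.sum_ite_eq' univ a₀ (fun _ => 1), mem_univ, if_true]
        rw [hs', Function.update_self]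
        omega
      · simp only [hb, and_false, if_false, Finset.sum_const_zero]
        rw [hs', Function.update_of_ne hb]
        omega


/-- Birkhoff-type decomposition for ℕ-matrices: a matrix with all row and
column sums equal to `d` is a sum of `d` permutation matrices. -/
lemma birkhoff_nat {α β : Type*} [Fintype α] [Fintype β] [DecidableEq α] [DecidableEq β]
    (hcard : Fintype.card α = Fintype.card β) (d : ℕ) (W : α → β → ℕ)
    (hrow : ∀ a, ∑ b, W a b = d) (hcol : ∀ b, ∑ a, W a b = d) :
    ∃ g : Fin d → (α ≃ β), ∀ a b, W a b = #{t : Fin d | (g t) a = b} := by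
  classical
  induction d generalizing W with
  | zero =>
    refine ⟨fun t => t.elim0, fun a b => ?_⟩
    have h1 : W a b = 0 := Finset.sum_eq_zero_iff.mp (hrow a) b (mem_univ b)
    have h2 : ({t : Fin 0 | (t.elim0 : α ≃ β) a = b} : Finset (Fin 0)) = ∅ := by
      apply Finset.eq_empty_of_forall_notMem; intro t; exact t.elim0
    rw [h1, h2]; rfl
  | succ n ih =>
    -- Hall's condition for the bipartite graph of nonzero entries
    have hall : ∀ A : Finset α, #A ≤ #(A.biUnion fun a => {b | 0 < W a b}) := by
      intro A
      set B := A.biUnion fun a => ({b | 0 < W a b} : Finset β) with hB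
      have key : (n+1) * #A ≤ (n+1) * #B := by
        calc (n+1) * #A = ∑ a ∈ A, (n+1) := by rw [Finset.sum_const, smul_eq_mul, mul_comm]
        _ = ∑ a ∈ A, ∑ b, W a b := by exact Finset.sum_congr rfl fun a _ => (hrow a).symm
        _ = ∑ a ∈ A, ∑ b ∈ B, W a b := by
            refine Finset.sum_congr rfl fun a ha => ?_
            refine (Finset.sum_subset (Finset.subset_univ _) ?_).symm
            intro b _ hb
            by_contra hw
            exact hb (Finset.mem_biUnion.mpr ⟨a, ha, by simp [Nat.pos_of_ne_zero hw]⟩)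
        _ = ∑ b ∈ B, ∑ a ∈ A, W a b := Finset.sum_comm
        _ ≤ ∑ b ∈ B, (n+1) := by
            refine Finset.sum_le_sum fun b _ => ?_
            rw [← hcol b]
            exact Finset.sum_le_sum_of_subset (Finset.subset_univ A)
        _ = (n+1) * #B := by rw [Finset.sum_const, smul_eq_mul, mul_comm]
      exact Nat.le_of_mul_le_mul_left key (Nat.succ_pos n)
    obtain ⟨f, hfinj, hf⟩ :=
      (Finset.all_card_le_biUnion_card_iff_exists_injective
        (fun a => ({b | 0 < W a b} : Finset β))).mp hall
    have hfbij : Function.Bijective f :=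
      (Fintype.bijective_iff_injective_and_card f).mpr ⟨hfinj, hcard⟩
    have hfpos : ∀ a, 0 < W a (f a) := fun a => by
      have := hf a; simpa using this
    set e := Equiv.ofBijective f hfbij with he
    set W' := fun a b => W a b - (if f a = b then 1 else 0) with hW'
    have hrow' : ∀ a, ∑ b, W' a b = n := by
      intro a
      rw [hW']
      rw [Finset.sum_tsub_distrib]
      · rw [hrow a, Finset.sum_ite_eq univ (f a) (fun _ => 1)]
        simp
      · intro b _
        by_cases hb : f a = b
        · subst hb; simpa using (Nat.one_le_iff_ne_zero.mpr (hfpos a).ne')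
        · simp [hb]
    have hcol' : ∀ b, ∑ a, W' a b = n := by
      intro b
      rw [hW']
      rw [Finset.sum_tsub_distrib]
      · rw [hcol b]
        have : ∑ a, (if f a = b then 1 else 0) = 1 := by
          rw [Finset.sum_boole]
          have : ({a | f a = b} : Finset α) = {e.symm b} := by
            ext a
            simp only [mem_filter, mem_univ, true_and, mem_singleton]
            constructor
            · intro h; rw [← h]; exact (e.symm_apply_apply a).symm ▸ rfl
            · intro h; subst h; exact e.apply_symm_apply b
          simp [this]
        rw [this]
        omega
      · intro a _
        by_cases hb : f a = b
        · subst hb; simpa using (Nat.one_le_iff_ne_zero.mpr (hfpos a).ne')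
        · simp [hb]
    obtain ⟨g', hg'⟩ := ih W' hrow' hcol'
    refine ⟨(Fin.cons e g' : Fin (n+1) → α ≃ β), fun a b => ?_⟩
    have hcount : #{t : Fin (n+1) | ((Fin.cons e g' : Fin (n+1) → α ≃ β) t) a = b}
        = (if e a = b then 1 else 0) + #{t : Fin n | (g' t) a = b} := by
      rw [Finset.card_filter, Fin.sum_univ_succ]
      simp only [Fin.cons_zero, Fin.cons_succ]
      rw [Finset.card_filter]
    rw [hcount, ← hg']
    have hite : (if (e : α ≃ β) a = b then 1 else 0) = (if f a = b then 1 else 0) := by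
      by_cases hb : f a = b
      · rw [if_pos hb, if_pos (show (e : α ≃ β) a = b from hb)]
      · rw [if_neg hb, if_neg (show ¬ (e : α ≃ β) a = b from hb)]
    rw [hite]
    simp only [hW']
    by_cases hb : f a = b
    · rw [if_pos hb]
      have := hfpos a
      rw [← hb] at *
      omega
    · rw [if_neg hb]
      omega


/-- Extending a partial latin square (a set `G` of complete rows, pairwise
column-injective) to a complete latin square. -/
lemma extend_square {H : Type*} [Fintype H] [DecidableEq H] :
    ∀ (n : ℕ) (G : Finset H) (E : H → H → H),
    #(univ \ G) = n →
    (∀ r ∈ G, Function.Bijective (E r)) →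
    (∀ (c : H), ∀ r₁ ∈ G, ∀ r₂ ∈ G, E r₁ c = E r₂ c → r₁ = r₂) →
    ∃ L : H → H → H, (∀ r, Function.Bijective (L r)) ∧
      (∀ (c : H) (r₁ r₂ : H), L r₁ c = L r₂ c → r₁ = r₂) ∧ (∀ r ∈ G, L r = E r) := by
  classical
  intro n
  induction n with
  | zero =>
    intro G E hn hrow hcol
    have hG : G = univ :=
      Finset.univ_subset_iff.mp (Finset.sdiff_eq_empty_iff_subset.mp (Finset.card_eq_zero.mp hn))
    subst hG
    exact ⟨E, fun r => hrow r (mem_univ r),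
      fun c r₁ r₂ h => hcol c r₁ (mem_univ r₁) r₂ (mem_univ r₂) h,
      fun r _ => rfl⟩
  | succ n ih =>
    intro G E hn hrow hcol
    have hm : Fintype.card H = #G + (n+1) := by
      rw [Finset.card_sdiff_of_subset (Finset.subset_univ G)] at hn
      have := Finset.card_le_univ G
      simp only [Finset.card_univ] at *
      omega
    obtain ⟨r₀, hr₀⟩ : ∃ r₀, r₀ ∈ univ \ G := Finset.card_pos.mp (by omega) |>.imp fun _ h => h
    have hr₀G : r₀ ∉ G := (Finset.mem_sdiff.mp hr₀).2
    set Avail : H → Finset H := fun c => univ.filter (fun y => ∀ r ∈ G, E r c ≠ y) with hAv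
    have hmem : ∀ (y c : H), y ∈ Avail c ↔ ∀ r ∈ G, E r c ≠ y := by
      intro y c
      simp only [hAv, mem_filter, mem_univ, true_and]
    -- each available set has exactly n+1 elements
    have hAvcard : ∀ c, #(Avail c) = n + 1 := by
      intro c
      have himg : #(G.image (fun r => E r c)) = #G := by
        apply Finset.card_image_of_injOn
        intro r₁ h₁ r₂ h₂ h
        exact hcol c r₁ h₁ r₂ h₂ h
      have hcompl : univ.filter (fun y => ¬ ∀ r ∈ G, E r c ≠ y) = G.image (fun r => E r c) := by
        ext y
        simp only [mem_filter, mem_univ, true_and, mem_image, not_forall]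
        push_neg
        constructor
        · rintro ⟨r, hr, h⟩; exact ⟨r, hr, h⟩
        · rintro ⟨r, hr, h⟩; exact ⟨r, hr, h⟩
      have := Finset.card_filter_add_card_filter_not
        (s := (univ : Finset H)) (p := fun y => ∀ r ∈ G, E r c ≠ y)
      rw [hcompl, himg, Finset.card_univ] at this
      show #(univ.filter (fun y => ∀ r ∈ G, E r c ≠ y)) = n + 1
      omega
    -- for fixed y, the number of columns where y is available is exactly n+1
    have hycard : ∀ y : H, #(univ.filter (fun c => y ∈ Avail c)) = n + 1 := by
      intro y
      haveI : Nonempty H := ⟨r₀⟩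
      have hnot : ∀ c, (¬ y ∈ Avail c) ↔ ∃ r ∈ G, E r c = y := by
        intro c
        simp [hmem]
      set colOf : H → H := fun r => Function.invFun (E r) y with hcolOf
      have hcolOf_eq : ∀ r ∈ G, E r (colOf r) = y := by
        intro r hr
        exact Function.rightInverse_invFun (hrow r hr).2 y
      have himg : G.image colOf = univ.filter (fun c => ¬ y ∈ Avail c) := by
        ext c
        simp only [mem_image, mem_filter, mem_univ, true_and, hnot]
        constructor
        · rintro ⟨r, hr, rfl⟩
          exact ⟨r, hr, hcolOf_eq r hr⟩
        · rintro ⟨r, hr, hE⟩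
          exact ⟨r, hr, (hrow r hr).1 ((hcolOf_eq r hr).trans hE.symm)⟩
      have hinj : Set.InjOn colOf G := by
        intro r₁ h₁ r₂ h₂ h
        apply hcol (colOf r₁) r₁ h₁ r₂ h₂
        rw [hcolOf_eq r₁ h₁, h, hcolOf_eq r₂ h₂]
      have hc1 : #(univ.filter (fun c => ¬ y ∈ Avail c)) = #G := by
        rw [← himg, Finset.card_image_of_injOn hinj]
      have := Finset.card_filter_add_card_filter_not
        (s := (univ : Finset H)) (p := fun c => y ∈ Avail c)
      rw [hc1, Finset.card_univ] at this
      omega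
    -- Hall's condition
    have hall : ∀ C : Finset H, #C ≤ #(C.biUnion Avail) := by
      intro C
      set B := C.biUnion Avail with hB
      have key : #C * (n+1) ≤ #B * (n+1) := by
        calc #C * (n+1) = ∑ c ∈ C, (n+1) := by rw [Finset.sum_const, smul_eq_mul]
        _ = ∑ c ∈ C, #(Avail c) := Finset.sum_congr rfl fun c _ => (hAvcard c).symm
        _ = ∑ c ∈ C, ∑ y : H, (if y ∈ Avail c then 1 else 0) := by
            refine Finset.sum_congr rfl fun c _ => ?_
            rw [Finset.sum_boole]
            congr 1
            ext y
            simp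
        _ = ∑ y : H, ∑ c ∈ C, (if y ∈ Avail c then 1 else 0) := Finset.sum_comm
        _ ≤ ∑ y : H, (if y ∈ B then (n+1) else 0) := by
            refine Finset.sum_le_sum fun y _ => ?_
            by_cases hy : y ∈ B
            · rw [if_pos hy]
              calc ∑ c ∈ C, (if y ∈ Avail c then 1 else 0)
                  ≤ ∑ c : H, (if y ∈ Avail c then 1 else 0) :=
                    Finset.sum_le_sum_of_subset (Finset.subset_univ C)
                _ = #(univ.filter (fun c => y ∈ Avail c)) := by
                    rw [Finset.sum_boole]; congr 1
                _ = n + 1 := hycard y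
            · rw [if_neg hy]
              apply Nat.le_zero.mpr
              apply Finset.sum_eq_zero
              intro c hc
              rw [if_neg]
              intro hmem
              exact hy (Finset.mem_biUnion.mpr ⟨c, hc, hmem⟩)
        _ = #B * (n+1) := by
            rw [Finset.sum_ite_mem, Finset.univ_inter, Finset.sum_const, smul_eq_mul]
      exact Nat.le_of_mul_le_mul_right key (Nat.succ_pos n)
    obtain ⟨f, hfinj, hf⟩ :=
      (Finset.all_card_le_biUnion_card_iff_exists_injective Avail).mp hall
    have hfavail : ∀ c, ∀ r ∈ G, E r c ≠ f c := by
      intro c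
      have := hf c
      rw [hmem] at this
      exact this
    set E' : H → H → H := fun r c => if r = r₀ then f c else E r c with hE'
    have hG' : #(univ \ insert r₀ G) = n := by
      rw [Finset.card_sdiff_of_subset (Finset.subset_univ _), Finset.card_insert_of_notMem hr₀G,
        Finset.card_univ]
      omega
    have hrow' : ∀ r ∈ insert r₀ G, Function.Bijective (E' r) := by
      intro r hrmem
      rcases Finset.mem_insert.mp hrmem with rfl | hrG
      · have : E' r = f := by funext c; rw [hE']; simp
        rw [this]
        exact (Finite.injective_iff_bijective).mp hfinj
      · have hne : r ≠ r₀ := fun h => hr₀G (h ▸ hrG)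
        have : E' r = E r := by funext c; rw [hE']; simp [hne]
        rw [this]
        exact hrow r hrG
    have hcol' : ∀ (c : H), ∀ r₁ ∈ insert r₀ G, ∀ r₂ ∈ insert r₀ G,
        E' r₁ c = E' r₂ c → r₁ = r₂ := by
      intro c r₁ h₁ r₂ h₂ h
      rcases Finset.mem_insert.mp h₁ with rfl | h₁G <;>
        rcases Finset.mem_insert.mp h₂ with rfl | h₂G
      · rfl
      · exfalso
        have hne : r₂ ≠ r₁ := fun hh => hr₀G (hh ▸ h₂G)
        rw [hE'] at h
        simp only [if_pos rfl, hne, if_neg hne] at h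
        exact hfavail c r₂ h₂G h.symm
      · exfalso
        have hne : r₁ ≠ r₂ := fun hh => hr₀G (hh ▸ h₁G)
        rw [hE'] at h
        simp only [if_pos rfl, hne, if_neg hne] at h
        exact hfavail c r₁ h₁G h
      · have hne₁ : r₁ ≠ r₀ := fun hh => hr₀G (hh ▸ h₁G)
        have hne₂ : r₂ ≠ r₀ := fun hh => hr₀G (hh ▸ h₂G)
        rw [hE'] at h
        simp only [if_neg hne₁, if_neg hne₂] at h
        exact hcol c r₁ h₁G r₂ h₂G h
    obtain ⟨L, hL1, hL2, hL3⟩ := ih (insert r₀ G) E' hG' hrow' hcol'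
    refine ⟨L, hL1, hL2, fun r hrG => ?_⟩
    have hne : r ≠ r₀ := fun h => hr₀G (h ▸ hrG)
    rw [hL3 r (Finset.mem_insert_of_mem hrG)]
    funext c
    rw [hE']
    simp [hne]

lemma row_ite_sum {H : Type*} [Fintype H] [DecidableEq H] (R : Finset H) :
    ∑ c : H, (if c ∈ R then 0 else 1) = Fintype.card H - #R := by
  classical
  rw [Finset.sum_ite, Finset.sum_const_zero, Finset.sum_const, zero_add, smul_eq_mul, mul_one]
  have h2 := Finset.card_filter_add_card_filter_not (s := (univ : Finset H))
    (p := fun c => c ∈ R)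
  have h3 : univ.filter (fun c => c ∈ R) = R := by ext c; simp
  rw [h3, Finset.card_univ] at h2
  omega

end Aux

theorem stmt_7 {Q : Type*} (op : Q → Q → Q)
    (hl : ∀ a : Q, Function.Bijective (op a))
    (hr : ∀ a : Q, Function.Bijective (fun x => op x a))
    (S : Finset Q) :
    ∃ (H : Type) (_ : Fintype H) (hop : H → H → H),
      (∀ a : H, Function.Bijective (hop a)) ∧
      (∀ a : H, Function.Bijective (fun x => hop x a)) ∧
      ∃ j : {x // x ∈ S} → H, Function.Injective j ∧
        ∀ (s₁ s₂ : {x // x ∈ S}) (h : op s₁.1 s₂.1 ∈ S),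
          j ⟨op s₁.1 s₂.1, h⟩ = hop (j s₁) (j s₂) := by
  classical
  set Sub := {x // x ∈ S} with hSub
  set Tset : Finset Q := S ∪ (S ×ˢ S).image (fun p => op p.1 p.2) with hTset
  set n' : ℕ := #(Tset \ S) with hn'
  set k : ℕ := #S with hk
  set p : ℕ := n' + k + 1 with hp
  have hppos : 0 < p := by omega
  have hle : n' ≤ p := by omega
  set H' := Sub ⊕ Fin p with hH'
  have hcardSub : Fintype.card Sub = k := Fintype.card_coe S
  have hcardH' : Fintype.card H' = k + p := by
    have h1 : Fintype.card H' = Fintype.card Sub + Fintype.card (Fin p) := Fintype.card_sum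
    rw [h1, Fintype.card_fin, hcardSub]
  -- the symbol embedding
  have hcard_diff : Fintype.card {x // x ∈ Tset \ S} = n' := by
    rw [hn', Fintype.card_coe]
  set eqv : {x // x ∈ Tset \ S} ≃ Fin n' := Fintype.equivFinOfCardEq hcard_diff with heqv
  set sym : Q → H' := fun q =>
    if h : q ∈ S then Sum.inl ⟨q, h⟩
    else if h2 : q ∈ Tset \ S then Sum.inr (Fin.castLE hle (eqv ⟨q, h2⟩))
    else Sum.inr ⟨0, hppos⟩ with hsym
  have hsymS : ∀ (q : Q) (h : q ∈ S), sym q = Sum.inl ⟨q, h⟩ := by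
    intro q h
    rw [hsym]
    simp [h]
  have hsyminj : ∀ q₁ ∈ Tset, ∀ q₂ ∈ Tset, sym q₁ = sym q₂ → q₁ = q₂ := by
    intro q₁ h₁ q₂ h₂ h
    simp only [hsym] at h
    by_cases hq₁ : q₁ ∈ S <;> by_cases hq₂ : q₂ ∈ S
    · rw [dif_pos hq₁, dif_pos hq₂] at h
      exact congrArg Subtype.val (Sum.inl_injective h)
    · have hd : q₂ ∈ Tset \ S := Finset.mem_sdiff.mpr ⟨h₂, hq₂⟩
      rw [dif_pos hq₁, dif_neg hq₂, dif_pos hd] at h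
      exact absurd h (by simp)
    · have hd : q₁ ∈ Tset \ S := Finset.mem_sdiff.mpr ⟨h₁, hq₁⟩
      rw [dif_neg hq₁, dif_pos hq₂, dif_pos hd] at h
      exact absurd h (by simp)
    · have hd₁ : q₁ ∈ Tset \ S := Finset.mem_sdiff.mpr ⟨h₁, hq₁⟩
      have hd₂ : q₂ ∈ Tset \ S := Finset.mem_sdiff.mpr ⟨h₂, hq₂⟩
      rw [dif_neg hq₁, dif_neg hq₂, dif_pos hd₁, dif_pos hd₂] at h
      have h' := Sum.inr_injective h
      have := eqv.injective (Fin.castLE_injective hle h')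
      exact congrArg Subtype.val this
  have hmemT : ∀ (s t : Sub), op s.1 t.1 ∈ Tset := by
    intro s t
    rw [hTset]
    exact Finset.mem_union_right _ (Finset.mem_image.mpr
      ⟨(s.1, t.1), Finset.mem_product.mpr ⟨s.2, t.2⟩, rfl⟩)
  -- the corner rows
  set cornerRow : Sub → Finset H' := fun s => univ.image (fun t : Sub => sym (op s.1 t.1))
    with hcornerRow
  have hcorner_card : ∀ s, #(cornerRow s) = k := by
    intro s
    rw [hcornerRow]
    rw [Finset.card_image_of_injOn]
    · rw [Finset.card_univ, hcardSub]
    · intro t₁ _ t₂ _ h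
      have := hsyminj _ (hmemT s t₁) _ (hmemT s t₂) h
      exact Subtype.ext ((hl s.1).1 this)
  -- the row-symbol incidence matrix, real part
  set realcol : H' → ℕ := fun c => ∑ s : Sub, if c ∈ cornerRow s then 0 else 1 with hrealcol
  have hrealcol_le : ∀ c, realcol c ≤ k := by
    intro c
    rw [hrealcol]
    calc ∑ s : Sub, (if c ∈ cornerRow s then 0 else 1) ≤ ∑ _s : Sub, 1 :=
          Finset.sum_le_sum fun s _ => by split <;> omega
    _ = k := by rw [Finset.sum_const, smul_eq_mul, mul_one, Finset.card_univ, hcardSub]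
  -- dummy rows from the margin realization lemma
  have hmargsum : ∑ _i : Fin p, p = ∑ c : H', (p - realcol c) := by
    rw [Finset.sum_tsub_distrib _ (fun c _ => le_trans (hrealcol_le c) (by omega))]
    have h1 : ∑ _i : Fin p, p = p * p := by
      rw [Finset.sum_const, smul_eq_mul, Finset.card_univ, Fintype.card_fin]
    have h2 : ∑ _c : H', p = (k + p) * p := by
      rw [Finset.sum_const, smul_eq_mul, Finset.card_univ, hcardH']
    have h3 : ∑ c : H', realcol c = k * p := by
      simp only [hrealcol]
      rw [Finset.sum_comm]
      have : ∀ s : Sub, ∑ c : H', (if c ∈ cornerRow s then 0 else 1) = p := by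
        intro s
        rw [row_ite_sum, hcorner_card s, hcardH']
        omega
      rw [Finset.sum_congr rfl fun s _ => this s, Finset.sum_const, smul_eq_mul,
        Finset.card_univ, hcardSub]
    rw [h1, h2, h3]
    have hcolsum_le : ∑ c : H', realcol c ≤ ∑ _c : H', k := Finset.sum_le_sum fun c _ =>
      hrealcol_le c
    ring_nf
    omega
  obtain ⟨Wdum, hWdum_row, hWdum_col⟩ := marg_realize (fun _ : Fin p => p)
    (fun c : H' => p - realcol c) hmargsum
  -- the full matrix
  set W : H' → H' → ℕ := fun r c =>
    Sum.elim (fun s => if c ∈ cornerRow s then 0 else 1) (fun i => Wdum i c) r with hW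
  have hrowW : ∀ r, ∑ c, W r c = p := by
    intro r
    rcases r with s | i
    · simp only [hW, Sum.elim_inl]
      rw [row_ite_sum, hcorner_card s, hcardH']
      omega
    · simp only [hW, Sum.elim_inr]
      exact hWdum_row i
  have hcolW : ∀ c, ∑ r, W r c = p := by
    intro c
    rw [Fintype.sum_sum_type]
    simp only [hW, Sum.elim_inl, Sum.elim_inr]
    rw [hWdum_col c]
    have h4 : (∑ x : Sub, if c ∈ cornerRow x then 0 else 1) = realcol c := rfl
    rw [h4]
    have := hrealcol_le c
    omega
  obtain ⟨g, hg⟩ := birkhoff_nat rfl p W hrowW hcolW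
  -- the latin rectangle
  set E : Sub → H' → H' := fun s c =>
    Sum.elim (fun t : Sub => sym (op s.1 t.1)) (fun i => g i (Sum.inl s)) c with hE
  have hWle1 : ∀ s c, W (Sum.inl s) c ≤ 1 := by
    intro s c
    simp only [hW, Sum.elim_inl]
    split <;> omega
  have hrowE : ∀ s, Function.Injective (E s) := by
    intro s c₁ c₂ h
    rcases c₁ with t₁ | i₁ <;> rcases c₂ with t₂ | i₂
    · simp only [hE, Sum.elim_inl] at h
      have := hsyminj _ (hmemT s t₁) _ (hmemT s t₂) h
      exact congrArg Sum.inl (Subtype.ext ((hl s.1).1 this))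
    · exfalso
      simp only [hE, Sum.elim_inl, Sum.elim_inr] at h
      have hmem : g i₂ (Sum.inl s) ∈ cornerRow s := by
        rw [← h, hcornerRow]
        exact Finset.mem_image.mpr ⟨t₁, mem_univ _, rfl⟩
      have hW0 : W (Sum.inl s) (g i₂ (Sum.inl s)) = 0 := by
        simp only [hW, Sum.elim_inl, if_pos hmem]
      rw [hg] at hW0
      have : i₂ ∈ ({t : Fin p | (g t) (Sum.inl s) = g i₂ (Sum.inl s)} : Finset (Fin p)) := by
        simp
      rw [Finset.card_eq_zero.mp hW0] at this
      exact absurd this (Finset.notMem_empty _)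
    · exfalso
      simp only [hE, Sum.elim_inl, Sum.elim_inr] at h
      have hmem : g i₁ (Sum.inl s) ∈ cornerRow s := by
        rw [h, hcornerRow]
        exact Finset.mem_image.mpr ⟨t₂, mem_univ _, rfl⟩
      have hW0 : W (Sum.inl s) (g i₁ (Sum.inl s)) = 0 := by
        simp only [hW, Sum.elim_inl, if_pos hmem]
      rw [hg] at hW0
      have : i₁ ∈ ({t : Fin p | (g t) (Sum.inl s) = g i₁ (Sum.inl s)} : Finset (Fin p)) := by
        simp
      rw [Finset.card_eq_zero.mp hW0] at this
      exact absurd this (Finset.notMem_empty _)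
    · simp only [hE, Sum.elim_inr] at h
      by_contra hne
      have hne' : i₁ ≠ i₂ := fun hh => hne (congrArg Sum.inr hh)
      have h2 : 1 < #({t : Fin p | (g t) (Sum.inl s) = g i₂ (Sum.inl s)} : Finset (Fin p)) := by
        apply Finset.one_lt_card.mpr
        exact ⟨i₁, by simp [h], i₂, by simp, hne'⟩
      rw [← hg] at h2
      have := hWle1 s (g i₂ (Sum.inl s))
      omega
  have hcolE : ∀ (c : H') (s₁ s₂ : Sub), E s₁ c = E s₂ c → s₁ = s₂ := by
    intro c s₁ s₂ h
    rcases c with t | i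
    · simp only [hE, Sum.elim_inl] at h
      have := hsyminj _ (hmemT s₁ t) _ (hmemT s₂ t) h
      exact Subtype.ext ((hr t.1).1 this)
    · simp only [hE, Sum.elim_inr] at h
      have := (g i).injective h
      exact Sum.inl_injective this
  -- extend to a full latin square
  set Esq : H' → H' → H' := fun r c => Sum.elim (fun s => E s c) (fun _ => c) r with hEsq
  set G : Finset H' := univ.image (Sum.inl : Sub → H') with hG
  have hmemG : ∀ r : H', r ∈ G ↔ ∃ s : Sub, Sum.inl s = r := by
    intro r
    rw [hG]
    simp
  obtain ⟨L, hL1, hL2, hL3⟩ := extend_square #(univ \ G) G Esq rfl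
    (by
      intro r hrG
      obtain ⟨s, rfl⟩ := (hmemG r).mp hrG
      have : Esq (Sum.inl s) = E s := by funext c; rw [hEsq]; simp
      rw [this]
      exact Finite.injective_iff_bijective.mp (hrowE s))
    (by
      intro c r₁ h₁ r₂ h₂ h
      obtain ⟨s₁, rfl⟩ := (hmemG r₁).mp h₁
      obtain ⟨s₂, rfl⟩ := (hmemG r₂).mp h₂
      simp only [hEsq, Sum.elim_inl] at h
      exact congrArg Sum.inl (hcolE c s₁ s₂ h))
  -- transport to `Fin m` to land in `Type 0`
  set m : ℕ := Fintype.card H' with hm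
  set e : H' ≃ Fin m := Fintype.equivFin H' with he
  refine ⟨Fin m, inferInstance, fun a b => e (L (e.symm a) (e.symm b)), ?_, ?_, ?_⟩
  · intro a
    exact e.bijective.comp ((hL1 (e.symm a)).comp e.symm.bijective)
  · intro a
    have hinj : Function.Injective (fun x : Fin m => e (L (e.symm x) (e.symm a))) := by
      intro x₁ x₂ h
      have := hL2 (e.symm a) _ _ (e.injective h)
      exact e.symm.injective this
    exact Finite.injective_iff_bijective.mp hinj
  · refine ⟨fun s => e (Sum.inl s), fun s₁ s₂ h => Sum.inl_injective (e.injective h), ?_⟩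
    intro s₁ s₂ h
    show e (Sum.inl ⟨op s₁.1 s₂.1, h⟩) = e (L (e.symm (e (Sum.inl s₁))) (e.symm (e (Sum.inl s₂))))
    rw [e.symm_apply_apply, e.symm_apply_apply]
    congr 1
    have h1 : L (Sum.inl s₁) = Esq (Sum.inl s₁) :=
      hL3 _ ((hmemG _).mpr ⟨s₁, rfl⟩)
    rw [h1]
    simp only [hEsq, Sum.elim_inl, hE]
    rw [hsymS _ h]
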